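/- Let A be the exterior algebra of a 2-dimensional vector space over a field of characteristic not 2, B = K·1 the unit subalgebra, and V the center of A. Then V = K·1 + K·(e₁∧e₂), and A is not a projective V-module; in particular the extension A over V is not depth two. -/

import Mathlib

open TensorProduct LinearMap

noncomputable section

variable {K : Type*} [CommRing K] {A B : Type*} [Ring A] [Ring B] [Algebra K A] [Algebra K B]

/-- Left multiplication by `a` on the first tensorand of `A ⊗[K] A`. -/
def lmulT (a : A) : A ⊗[K] A →ₗ[K] A ⊗[K] A := rTensor A (mulLeft K a)

/-- Right multiplication by `a` on the second tensorand of `A ⊗[K] A`. -/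
def rmulT (a : A) : A ⊗[K] A →ₗ[K] A ⊗[K] A := lTensor A (mulRight K a)

/-- The relations defining `A ⊗_B A` as a quotient of `A ⊗[K] A`; working modulo
`relJ f` amounts to working in the tensor square `A ⊗_B A` of the extension `f`. -/
def relJ (f : B →ₐ[K] A) : Submodule K (A ⊗[K] A) :=
  Submodule.span K {z | ∃ x b y, z = (x * f b) ⊗ₜ[K] y - x ⊗ₜ[K] (f b * y)}

/-- `α` is a `B`-`B`-bimodule endomorphism of `A`. -/
def IsBB (f : B →ₐ[K] A) (α : A →ₗ[K] A) : Prop :=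
  (∀ b x, α (f b * x) = f b * α x) ∧ (∀ b x, α (x * f b) = α x * f b)

/-- `t` represents a `B`-central element of `A ⊗_B A`. -/
def IsCent (f : B →ₐ[K] A) (t : A ⊗[K] A) : Prop :=
  ∀ b, lmulT (K := K) (f b) t - rmulT (f b) t ∈ relJ f

/-- `A ⊗_B A` is isomorphic, as a `B`-`A`-bimodule, to a direct summand of `A^N`
for some positive `N`: there is a split mono `ι` (with splitting `π`), both maps
being `B`-`A`-bimodule maps (everything taken modulo the relations `relJ f`). -/
def LeftD2 (f : B →ₐ[K] A) : Prop :=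
  ∃ N : ℕ, 0 < N ∧ ∃ (ι : A ⊗[K] A →ₗ[K] (Fin N → A)) (π : (Fin N → A) →ₗ[K] A ⊗[K] A),
    (∀ z ∈ relJ f, ι z = 0) ∧
    (∀ b z, ι (lmulT (f b) z) = fun i => f b * ι z i) ∧
    (∀ a z, ι (rmulT a z) = fun i => ι z i * a) ∧
    (∀ b (v : Fin N → A), π (fun i => f b * v i) - lmulT (f b) (π v) ∈ relJ f) ∧
    (∀ a (v : Fin N → A), π (fun i => v i * a) - rmulT a (π v) ∈ relJ f) ∧
    (∀ z, π (ι z) - z ∈ relJ f)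

/-- `A ⊗_B A` is isomorphic, as an `A`-`B`-bimodule, to a direct summand of `A^N`. -/
def RightD2 (f : B →ₐ[K] A) : Prop :=
  ∃ N : ℕ, 0 < N ∧ ∃ (ι : A ⊗[K] A →ₗ[K] (Fin N → A)) (π : (Fin N → A) →ₗ[K] A ⊗[K] A),
    (∀ z ∈ relJ f, ι z = 0) ∧
    (∀ a z, ι (lmulT a z) = fun i => a * ι z i) ∧
    (∀ b z, ι (rmulT (f b) z) = fun i => ι z i * f b) ∧
    (∀ a (v : Fin N → A), π (fun i => a * v i) - lmulT a (π v) ∈ relJ f) ∧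
    (∀ b (v : Fin N → A), π (fun i => v i * f b) - rmulT (f b) (π v) ∈ relJ f) ∧
    (∀ z, π (ι z) - z ∈ relJ f)

/-- `A ⊗_B A` is isomorphic, as an `A`-`A`-bimodule, to a direct summand of `A^N`:
H-separability of the extension `f`. -/
def HSep (f : B →ₐ[K] A) : Prop :=
  ∃ N : ℕ, 0 < N ∧ ∃ (ι : A ⊗[K] A →ₗ[K] (Fin N → A)) (π : (Fin N → A) →ₗ[K] A ⊗[K] A),
    (∀ z ∈ relJ f, ι z = 0) ∧
    (∀ a z, ι (lmulT a z) = fun i => a * ι z i) ∧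
    (∀ a z, ι (rmulT a z) = fun i => ι z i * a) ∧
    (∀ a (v : Fin N → A), π (fun i => a * v i) - lmulT a (π v) ∈ relJ f) ∧
    (∀ a (v : Fin N → A), π (fun i => v i * a) - rmulT a (π v) ∈ relJ f) ∧
    (∀ z, π (ι z) - z ∈ relJ f)


namespace Ext2

variable (k : Type*) [Field k]

abbrev Λ2 := ExteriorAlgebra k (Fin 2 → k)

def e1 : Λ2 k := ExteriorAlgebra.ι k (Pi.single 0 1)
def e2 : Λ2 k := ExteriorAlgebra.ι k (Pi.single 1 1)
def w : Λ2 k := e1 k * e2 k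

variable {k}

lemma e1e1 : e1 k * e1 k = 0 := ExteriorAlgebra.ι_sq_zero _
lemma e2e2 : e2 k * e2 k = 0 := ExteriorAlgebra.ι_sq_zero _
lemma e1e2 : e1 k * e2 k = w k := rfl
lemma e2e1 : e2 k * e1 k = - w k := by
  have h := ExteriorAlgebra.ι_add_mul_swap (R := k) (Pi.single 0 1 : Fin 2 → k)
    (Pi.single 1 1 : Fin 2 → k)
  rw [eq_neg_iff_add_eq_zero, w, add_comm]
  exact h
lemma e1w : e1 k * w k = 0 := by rw [w, ← mul_assoc, e1e1, zero_mul]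
lemma we2 : w k * e2 k = 0 := by rw [w, mul_assoc, e2e2, mul_zero]
lemma we1 : w k * e1 k = 0 := by
  rw [w, mul_assoc, e2e1, mul_neg, w, ← mul_assoc, e1e1, zero_mul, neg_zero]
lemma e2w : e2 k * w k = 0 := by
  rw [w, ← mul_assoc, e2e1, neg_mul, we2, neg_zero]
lemma ww : w k * w k = 0 := by
  rw [w, mul_assoc, ← w, e2w, mul_zero]

lemma ι_decomp (m : Fin 2 → k) :
    ExteriorAlgebra.ι k m = m 0 • e1 k + m 1 • e2 k := by
  rw [e1, e2, ← map_smul, ← map_smul, ← map_add]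
  congr 1
  ext i
  fin_cases i <;> simp

lemma span_top : Submodule.span k {(1 : Λ2 k), e1 k, e2 k, w k} = ⊤ := by
  rw [eq_top_iff]
  rintro x -
  induction x using ExteriorAlgebra.induction with
  | algebraMap r =>
      rw [Algebra.algebraMap_eq_smul_one]
      exact Submodule.smul_mem _ _ (Submodule.subset_span (by simp))
  | ι m =>
      rw [ι_decomp]
      exact Submodule.add_mem _
        (Submodule.smul_mem _ _ (Submodule.subset_span (by simp)))
        (Submodule.smul_mem _ _ (Submodule.subset_span (by simp)))
  | mul a b ha hb =>
      have : a * b ∈ Submodule.span k {(1 : Λ2 k), e1 k, e2 k, w k} *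
          Submodule.span k {(1 : Λ2 k), e1 k, e2 k, w k} :=
        Submodule.mul_mem_mul ha hb
      rw [Submodule.span_mul_span] at this
      refine Submodule.span_le.2 ?_ this
      rintro z ⟨x, hx, y, hy, rfl⟩
      rw [SetLike.mem_coe]
      have h0 : (0 : Λ2 k) ∈ Submodule.span k {(1 : Λ2 k), e1 k, e2 k, w k} :=
        Submodule.zero_mem _
      have m1 : (1 : Λ2 k) ∈ Submodule.span k {(1 : Λ2 k), e1 k, e2 k, w k} :=
        Submodule.subset_span (by simp)
      have me1 : e1 k ∈ Submodule.span k {(1 : Λ2 k), e1 k, e2 k, w k} :=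
        Submodule.subset_span (by simp)
      have me2 : e2 k ∈ Submodule.span k {(1 : Λ2 k), e1 k, e2 k, w k} :=
        Submodule.subset_span (by simp)
      have mw : w k ∈ Submodule.span k {(1 : Λ2 k), e1 k, e2 k, w k} :=
        Submodule.subset_span (by simp)
      have mnw : -w k ∈ Submodule.span k {(1 : Λ2 k), e1 k, e2 k, w k} :=
        Submodule.neg_mem _ mw
      simp only [Set.mem_insert_iff, Set.mem_singleton_iff] at hx hy
      rcases hx with rfl | rfl | rfl | rfl <;> rcases hy with rfl | rfl | rfl | rfl <;>
        simp only [one_mul, mul_one, e1e1, e2e2, e1w, we1, e2w, we2, ww, e2e1, e1e2] <;>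
        first
          | exact h0
          | exact m1
          | exact me1
          | exact me2
          | exact mw
          | exact mnw
  | add a b ha hb => exact Submodule.add_mem _ ha hb

variable (k)

def E1 : Matrix (Fin 4) (Fin 4) k := !![0,0,0,0; 1,0,0,0; 0,0,0,0; 0,0,1,0]
def E2 : Matrix (Fin 4) (Fin 4) k := !![0,0,0,0; 0,0,0,0; 1,0,0,0; 0,-1,0,0]

variable {k}

lemma hE1 : E1 k * E1 k = 0 := by
  ext i j
  fin_cases i <;> fin_cases j <;>
    simp [E1, Matrix.mul_apply, Fin.sum_univ_four, Matrix.vecHead, Matrix.vecTail]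

lemma hE2 : E2 k * E2 k = 0 := by
  ext i j
  fin_cases i <;> fin_cases j <;>
    simp [E2, Matrix.mul_apply, Fin.sum_univ_four, Matrix.vecHead, Matrix.vecTail]

lemma hE12 : E1 k * E2 k + E2 k * E1 k = 0 := by
  ext i j
  fin_cases i <;> fin_cases j <;>
    simp [E1, E2, Matrix.mul_apply, Fin.sum_univ_four, Matrix.vecHead, Matrix.vecTail]

variable (k)

def fmap : (Fin 2 → k) →ₗ[k] Matrix (Fin 4) (Fin 4) k :=
  (LinearMap.proj 0 : (Fin 2 → k) →ₗ[k] k).smulRight (E1 k) +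
  (LinearMap.proj 1 : (Fin 2 → k) →ₗ[k] k).smulRight (E2 k)

lemma fmap_apply (m : Fin 2 → k) : fmap k m = m 0 • E1 k + m 1 • E2 k := rfl

lemma fmap_sq (m : Fin 2 → k) : fmap k m * fmap k m = 0 := by
  rw [fmap_apply, add_mul, mul_add, mul_add, smul_mul_assoc, smul_mul_assoc,
    smul_mul_assoc, smul_mul_assoc, mul_smul_comm, mul_smul_comm, mul_smul_comm,
    mul_smul_comm, hE1, hE2, smul_zero, smul_zero, smul_zero, smul_zero, add_zero,
    zero_add, smul_smul, smul_smul, mul_comm (m 1) (m 0), ← smul_add, hE12, smul_zero]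

def φ : Λ2 k →ₐ[k] Matrix (Fin 4) (Fin 4) k :=
  ExteriorAlgebra.lift k ⟨fmap k, fmap_sq k⟩

lemma φ_e1 : φ k (e1 k) = E1 k := by
  rw [e1, φ, ExteriorAlgebra.lift_ι_apply, fmap_apply]
  simp

lemma φ_e2 : φ k (e2 k) = E2 k := by
  rw [e2, φ, ExteriorAlgebra.lift_ι_apply, fmap_apply]
  simp

lemma φ_w : φ k (w k) = E1 k * E2 k := by
  rw [w, map_mul, φ_e1, φ_e2]

/-- coordinate functionals -/
def cf (j : Fin 4) : Λ2 k →ₗ[k] k :=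
  (LinearMap.proj (0 : Fin 4)).comp
    (((LinearMap.proj j : (Fin 4 → Fin 4 → k) →ₗ[k] (Fin 4 → k))).comp
      ((φ k).toLinearMap))

lemma cf_apply (j : Fin 4) (x : Λ2 k) : cf k j x = φ k x j 0 := rfl

lemma cf_one (j : Fin 4) : cf k j 1 = ![1,0,0,0] j := by
  rw [cf_apply, map_one]
  fin_cases j <;> simp [Matrix.one_apply, Matrix.vecHead, Matrix.vecTail]

lemma cf_e1 (j : Fin 4) : cf k j (e1 k) = ![0,1,0,0] j := by
  rw [cf_apply, φ_e1]
  fin_cases j <;> simp [E1, Matrix.vecHead, Matrix.vecTail]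

lemma cf_e2 (j : Fin 4) : cf k j (e2 k) = ![0,0,1,0] j := by
  rw [cf_apply, φ_e2]
  fin_cases j <;> simp [E2, Matrix.vecHead, Matrix.vecTail]

lemma cf_w (j : Fin 4) : cf k j (w k) = ![0,0,0,1] j := by
  rw [cf_apply, φ_w]
  fin_cases j <;> simp [E1, E2, Matrix.mul_apply, Fin.sum_univ_four, Matrix.vecHead,
    Matrix.vecTail]

lemma decomp (x : Λ2 k) :
    x = cf k 0 x • 1 + cf k 1 x • e1 k + cf k 2 x • e2 k + cf k 3 x • w k := by
  have hR : ((cf k 0).smulRight (1 : Λ2 k) + (cf k 1).smulRight (e1 k) +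
      (cf k 2).smulRight (e2 k) + (cf k 3).smulRight (w k)) = LinearMap.id := by
    apply LinearMap.ext_on span_top
    rintro y hy
    simp only [Set.mem_insert_iff, Set.mem_singleton_iff] at hy
    rcases hy with rfl | rfl | rfl | rfl <;>
      simp [cf_one, cf_e1, cf_e2, cf_w]
  have h := LinearMap.congr_fun hR x
  simpa using h.symm

lemma mul_w (a : Λ2 k) : a * w k = cf k 0 a • w k := by
  conv_lhs => rw [decomp k a]
  simp [add_mul, smul_mul_assoc, e1w, e2w, ww]

lemma w_mul (a : Λ2 k) : w k * a = cf k 0 a • w k := by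
  conv_lhs => rw [decomp k a]
  simp [mul_add, mul_smul_comm, we1, we2, ww]

lemma w_central : w k ∈ Subalgebra.center k (Λ2 k) := by
  rw [Subalgebra.mem_center_iff]
  intro a
  rw [mul_w, w_mul]

lemma central_coords (hchar : (2 : k) ≠ 0) {x : Λ2 k}
    (hx : x ∈ Subalgebra.center k (Λ2 k)) : cf k 1 x = 0 ∧ cf k 2 x = 0 := by
  have h1 : e1 k * x = x * e1 k := Subalgebra.mem_center_iff.mp hx (e1 k)
  have h2 : e2 k * x = x * e2 k := Subalgebra.mem_center_iff.mp hx (e2 k)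
  rw [decomp k x] at h1 h2
  simp only [mul_add, add_mul, mul_smul_comm, smul_mul_assoc, mul_one, one_mul,
    e1e1, e2e2, e1e2, e2e1, e1w, we1, e2w, we2, ww, smul_zero, smul_neg,
    add_zero, zero_add] at h1 h2
  -- h1 : cf0 x • e1 + cf2 x • w = cf0 x • e1 + -(cf2 x • w)  (or similar)
  have h1' := congrArg (cf k 3) h1
  have h2' := congrArg (cf k 3) h2
  simp [map_add, map_smul, map_neg, cf_e1, cf_e2, cf_w, cf_one] at h1' h2'
  have hzero : ∀ a : k, a = -a → a = 0 := by
    intro a h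
    have haa : a + a = 0 := by nth_rw 2 [h]; exact add_neg_cancel a
    have h2a : 2 * a = 0 := by rw [two_mul]; exact haa
    rcases mul_eq_zero.mp h2a with h' | h'
    · exact absurd h' hchar
    · exact h'
  exact ⟨hzero _ h2'.symm, hzero _ h1'⟩

lemma center_eq (hchar : (2 : k) ≠ 0) :
    Subalgebra.toSubmodule (Subalgebra.center k (Λ2 k)) =
      Submodule.span k {(1 : Λ2 k), w k} := by
  apply le_antisymm
  · intro x hx
    rw [Subalgebra.mem_toSubmodule] at hx
    obtain ⟨hc1, hc2⟩ := central_coords k hchar hx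
    rw [Submodule.mem_span_pair]
    refine ⟨cf k 0 x, cf k 3 x, ?_⟩
    conv_rhs => rw [decomp k x]
    rw [hc1, hc2]
    simp
  · rw [Submodule.span_le]
    rintro y hy
    simp only [Set.mem_insert_iff, Set.mem_singleton_iff] at hy
    rw [SetLike.mem_coe, Subalgebra.mem_toSubmodule]
    rcases hy with rfl | rfl
    · exact one_mem _
    · exact w_central k

lemma kills (hchar : (2 : k) ≠ 0) {x : Λ2 k} (hx : x ∈ Subalgebra.center k (Λ2 k))
    (hwx : w k * x = 0) (a : Λ2 k) : x * a ∈ Submodule.span k {w k} := by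
  obtain ⟨hc1, hc2⟩ := central_coords k hchar hx
  have hc0 : cf k 0 x = 0 := by
    rw [w_mul] at hwx
    have h := congrArg (cf k 3) hwx
    simp [cf_w] at h
    exact h
  have hx' : x = cf k 3 x • w k := by
    conv_lhs => rw [decomp k x]
    rw [hc0, hc1, hc2]
    simp
  rw [hx', smul_mul_assoc, w_mul]
  exact Submodule.smul_mem _ _ (Submodule.smul_mem _ _ (Submodule.mem_span_singleton_self _))

lemma sq_zero_coords {a : Λ2 k} (h1 : a * e1 k = 0) (h2 : a * e2 k = 0) :
    a = cf k 3 a • w k := by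
  rw [decomp k a] at h1 h2
  simp only [add_mul, smul_mul_assoc, one_mul, e1e1, e2e1, e1e2, e2e2, we1, we2,
    smul_zero, smul_neg, add_zero, zero_add] at h1 h2
  have k1 := congrArg (cf k 1) h1
  have k3 := congrArg (cf k 3) h1
  have k3' := congrArg (cf k 3) h2
  simp [cf_e1, cf_e2, cf_w] at k1 k3 k3'
  conv_lhs => rw [decomp k a]
  rw [k1, k3, k3']
  simp


def Φf : (Λ2 k ⊗[k] Λ2 k) →ₗ[k] k := TensorProduct.lift ((cf k 1).smulRight (cf k 2))

lemma Φf_tmul (x y : Λ2 k) : Φf k (x ⊗ₜ[k] y) = cf k 1 x * cf k 2 y := by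
  simp [Φf, smul_eq_mul]

lemma central_form (hchar : (2 : k) ≠ 0) {x : Λ2 k}
    (hx : x ∈ Subalgebra.center k (Λ2 k)) :
    ∃ α δ : k, x = α • (1 : Λ2 k) + δ • w k := by
  obtain ⟨h1, h2⟩ := central_coords k hchar hx
  refine ⟨cf k 0 x, cf k 3 x, ?_⟩
  conv_lhs => rw [decomp k x]
  rw [h1, h2]
  simp

lemma Φf_relJ (hchar : (2 : k) ≠ 0) :
    ∀ z ∈ relJ (Subalgebra.center k (Λ2 k)).val, Φf k z = 0 := by
  have hle : relJ (Subalgebra.center k (Λ2 k)).val ≤ LinearMap.ker (Φf k) := by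
    rw [relJ, Submodule.span_le]
    rintro _ ⟨x, b, y, rfl⟩
    rw [SetLike.mem_coe, LinearMap.mem_ker, map_sub, Φf_tmul, Φf_tmul]
    obtain ⟨α, δ, hc⟩ := central_form k hchar b.2
    have hcv : (Subalgebra.center k (Λ2 k)).val b = α • (1 : Λ2 k) + δ • w k := hc
    rw [hcv, mul_add, add_mul, mul_smul_comm, mul_smul_comm, smul_mul_assoc,
      smul_mul_assoc, mul_one, one_mul, mul_w, w_mul, map_add, map_add, map_smul,
      map_smul, map_smul, map_smul, map_smul, map_smul, cf_w]
    simp [cf_w, smul_eq_mul]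
    ring
  intro z hz
  exact LinearMap.mem_ker.mp (hle hz)

lemma Φf_lmulT_w (z : Λ2 k ⊗[k] Λ2 k) : Φf k (lmulT (K := k) (w k) z) = 0 := by
  have h : (Φf k).comp (lmulT (K := k) (w k)) = 0 := by
    apply TensorProduct.ext'
    intro x y
    rw [LinearMap.comp_apply]
    have : lmulT (K := k) (w k) (x ⊗ₜ[k] y) = (w k * x) ⊗ₜ[k] y := by
      simp [lmulT]
    rw [this, Φf_tmul, w_mul]
    simp [cf_w]
  exact LinearMap.congr_fun h z

end Ext2

set_option maxHeartbeats 1000000 in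
set_option synthInstance.maxHeartbeats 400000 in
lemma Ext2.part2 (k : Type*) [Field k] (hchar : (2 : k) ≠ 0) :
    (letI : Module (ExteriorAlgebra k (Fin 2 → k)) (ExteriorAlgebra k (Fin 2 → k)) :=
        Semiring.toModule
     letI : Module ↥(Subalgebra.center k (ExteriorAlgebra k (Fin 2 → k)))
        (ExteriorAlgebra k (Fin 2 → k)) :=
      Module.compHom _ (Subalgebra.center k (ExteriorAlgebra k (Fin 2 → k))).val.toRingHom
     ¬ Module.Projective ↥(Subalgebra.center k (ExteriorAlgebra k (Fin 2 → k)))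
        (ExteriorAlgebra k (Fin 2 → k))) := by
  letI i1 : Module (ExteriorAlgebra k (Fin 2 → k)) (ExteriorAlgebra k (Fin 2 → k)) :=
    Semiring.toModule
  letI i2 : Module ↥(Subalgebra.center k (ExteriorAlgebra k (Fin 2 → k)))
      (ExteriorAlgebra k (Fin 2 → k)) :=
    Module.compHom (ExteriorAlgebra k (Fin 2 → k))
      (Subalgebra.center k (ExteriorAlgebra k (Fin 2 → k))).val.toRingHom
  intro hP
  have hwV : Ext2.w k ∈ Subalgebra.center k (Ext2.Λ2 k) := Ext2.w_central k
  obtain ⟨s, hs⟩ := hP.out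
  set wV : ↥(Subalgebra.center k (ExteriorAlgebra k (Fin 2 → k))) := ⟨Ext2.w k, hwV⟩ with hwVdef
  have hsm : wV • Ext2.e1 k = (0 : ExteriorAlgebra k (Fin 2 → k)) := by
    show Ext2.w k * Ext2.e1 k = 0
    exact Ext2.we1
  have hse : wV • s (Ext2.e1 k) = 0 := by rw [← map_smul, hsm, map_zero]
  have key : Ext2.e1 k ∈ Submodule.span k {Ext2.w k} := by
    have he1 := (hs (Ext2.e1 k)).symm
    rw [Finsupp.linearCombination_apply, Finsupp.sum] at he1
    rw [he1]
    apply Submodule.sum_mem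
    intro a ha
    have hcoord : wV * (s (Ext2.e1 k)) a = 0 := by
      have h := DFunLike.congr_fun hse a
      rwa [Finsupp.smul_apply, Finsupp.coe_zero, Pi.zero_apply, smul_eq_mul] at h
    have hw0 : Ext2.w k * ((s (Ext2.e1 k)) a : ExteriorAlgebra k (Fin 2 → k)) = 0 :=
      congrArg Subtype.val hcoord
    have hterm := Ext2.kills k hchar ((s (Ext2.e1 k)) a).2 hw0 a
    exact hterm
  obtain ⟨c, hc⟩ := Submodule.mem_span_singleton.mp key
  have hcontr := congrArg (Ext2.cf k 1) hc
  rw [map_smul, Ext2.cf_w, Ext2.cf_e1] at hcontr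
  simp at hcontr

set_option maxHeartbeats 1000000 in
set_option synthInstance.maxHeartbeats 400000 in
lemma Ext2.part3 (k : Type*) [Field k] (hchar : (2 : k) ≠ 0) :
    ¬ (LeftD2 (Subalgebra.center k (ExteriorAlgebra k (Fin 2 → k))).val ∧
        RightD2 (Subalgebra.center k (ExteriorAlgebra k (Fin 2 → k))).val) := by
  have hwV : Ext2.w k ∈ Subalgebra.center k (Ext2.Λ2 k) := Ext2.w_central k
  rintro ⟨hL, -⟩
  obtain ⟨N, -, ι, π, hι0, hιl, hιr, hπl, hπr, hπι⟩ := hL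
  set u : ExteriorAlgebra k (Fin 2 → k) ⊗[k] ExteriorAlgebra k (Fin 2 → k) :=
    Ext2.e1 k ⊗ₜ[k] Ext2.e2 k - Ext2.e2 k ⊗ₜ[k] Ext2.e1 k with hu
  have hfw : (Subalgebra.center k (ExteriorAlgebra k (Fin 2 → k))).val
      ⟨Ext2.w k, hwV⟩ = Ext2.w k := rfl
  have hrel1 : Ext2.e1 k ⊗ₜ[k] Ext2.w k ∈
      relJ (Subalgebra.center k (ExteriorAlgebra k (Fin 2 → k))).val := by
    have hgen := Submodule.subset_span (R := k)
      (s := {z | ∃ x b y, z = (x * (Subalgebra.center k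
        (ExteriorAlgebra k (Fin 2 → k))).val b) ⊗ₜ[k] y -
        x ⊗ₜ[k] ((Subalgebra.center k (ExteriorAlgebra k (Fin 2 → k))).val b * y)})
      ⟨Ext2.e1 k, ⟨Ext2.w k, hwV⟩, 1, rfl⟩
    rw [hfw, Ext2.e1w, mul_one, TensorProduct.zero_tmul, zero_sub] at hgen
    have := Submodule.neg_mem _ hgen
    rw [neg_neg] at this
    exact this
  have hrel2 : Ext2.e2 k ⊗ₜ[k] Ext2.w k ∈
      relJ (Subalgebra.center k (ExteriorAlgebra k (Fin 2 → k))).val := by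
    have hgen := Submodule.subset_span (R := k)
      (s := {z | ∃ x b y, z = (x * (Subalgebra.center k
        (ExteriorAlgebra k (Fin 2 → k))).val b) ⊗ₜ[k] y -
        x ⊗ₜ[k] ((Subalgebra.center k (ExteriorAlgebra k (Fin 2 → k))).val b * y)})
      ⟨Ext2.e2 k, ⟨Ext2.w k, hwV⟩, 1, rfl⟩
    rw [hfw, Ext2.e2w, mul_one, TensorProduct.zero_tmul, zero_sub] at hgen
    have := Submodule.neg_mem _ hgen
    rw [neg_neg] at this
    exact this
  have hu1 : rmulT (K := k) (Ext2.e1 k) u = -(Ext2.e1 k ⊗ₜ[k] Ext2.w k) := by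
    rw [hu]
    rw [map_sub]
    simp only [rmulT, LinearMap.lTensor_tmul, LinearMap.mulRight_apply,
      Ext2.e2e1, Ext2.e1e1, TensorProduct.tmul_zero, TensorProduct.tmul_neg, sub_zero]
  have hu2 : rmulT (K := k) (Ext2.e2 k) u = -(Ext2.e2 k ⊗ₜ[k] Ext2.w k) := by
    rw [hu]
    rw [map_sub]
    simp only [rmulT, LinearMap.lTensor_tmul, LinearMap.mulRight_apply,
      Ext2.e2e2, Ext2.e1e2, TensorProduct.tmul_zero, TensorProduct.tmul_neg, zero_sub]
  have h1 : ∀ i, ι u i * Ext2.e1 k = 0 := by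
    intro i
    have h := hιr (Ext2.e1 k) u
    rw [hu1, map_neg, hι0 _ hrel1, neg_zero] at h
    exact (congrFun h i).symm
  have h2 : ∀ i, ι u i * Ext2.e2 k = 0 := by
    intro i
    have h := hιr (Ext2.e2 k) u
    rw [hu2, map_neg, hι0 _ hrel2, neg_zero] at h
    exact (congrFun h i).symm
  set v : Fin N → ExteriorAlgebra k (Fin 2 → k) :=
    fun i => Ext2.cf k 3 (ι u i) • (1 : ExteriorAlgebra k (Fin 2 → k)) with hv
  have hvι : (fun i => (Subalgebra.center k (ExteriorAlgebra k (Fin 2 → k))).val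
      ⟨Ext2.w k, hwV⟩ * v i) = ι u := by
    funext i
    rw [hfw, hv]
    show Ext2.w k * (Ext2.cf k 3 (ι u i) • (1 : ExteriorAlgebra k (Fin 2 → k))) = ι u i
    rw [mul_smul_comm, mul_one, ← Ext2.sq_zero_coords k (h1 i) (h2 i)]
  have m1 := hπl ⟨Ext2.w k, hwV⟩ v
  rw [hvι] at m1
  have m2 := hπι u
  have m3 := Submodule.sub_mem _ m1 m2
  rw [sub_sub_sub_cancel_left] at m3
  have hker := Ext2.Φf_relJ k hchar _ m3
  rw [map_sub] at hker
  have hL0 : Ext2.Φf k (lmulT (K := k) ((Subalgebra.center k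
      (ExteriorAlgebra k (Fin 2 → k))).val ⟨Ext2.w k, hwV⟩) (π v)) = 0 := by
    rw [hfw]
    exact Ext2.Φf_lmulT_w k _
  have hΦu : Ext2.Φf k u = 1 := by
    rw [hu, map_sub, Ext2.Φf_tmul, Ext2.Φf_tmul, Ext2.cf_e1, Ext2.cf_e2,
      Ext2.cf_e1, Ext2.cf_e2]
    norm_num
    rfl
  rw [hΦu, hL0, sub_zero] at hker
  exact one_ne_zero hker

/-- for the exterior algebra `A = Λ(W₂)` of a 2-dimensional vector space
over a field of characteristic ≠ 2, the center `V` (which is the double centralizer of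
the unit subalgebra `B = K·1`) equals `K·1 + K·(e₁ ∧ e₂)`, `A` is not a projective
`V`-module, and in particular the extension `A | V` is not depth two. -/
theorem exterior_center_not_projective (k : Type*) [Field k] (hchar : (2 : k) ≠ 0) :
    (Subalgebra.toSubmodule (Subalgebra.center k (ExteriorAlgebra k (Fin 2 → k))) =
        Submodule.span k {1, ExteriorAlgebra.ι k (Pi.single 0 1) *
          ExteriorAlgebra.ι k (Pi.single 1 1)}) ∧
    (letI : Module (ExteriorAlgebra k (Fin 2 → k)) (ExteriorAlgebra k (Fin 2 → k)) :=
        Semiring.toModule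
     letI : Module ↥(Subalgebra.center k (ExteriorAlgebra k (Fin 2 → k)))
        (ExteriorAlgebra k (Fin 2 → k)) :=
      Module.compHom _ (Subalgebra.center k (ExteriorAlgebra k (Fin 2 → k))).val.toRingHom
     ¬ Module.Projective ↥(Subalgebra.center k (ExteriorAlgebra k (Fin 2 → k)))
        (ExteriorAlgebra k (Fin 2 → k))) ∧
    ¬ (LeftD2 (Subalgebra.center k (ExteriorAlgebra k (Fin 2 → k))).val ∧
        RightD2     (Subalgebra.center k (ExteriorAlgebra k (Fin 2 → k))).val) :=
  ⟨Ext2.center_eq k hchar, Ext2.part2 k hchar, Ext2.part3 k hchar⟩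

end
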